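/- If F_n is a sequence of NBUE life distributions with means μ_n ≤ M for all n, and F_n converges in distribution to a continuous life distribution F with finite mean μ, then F is NBUE. -/

import Mathlib

open MeasureTheory Set Filter

/-- If `Fₙ` are NBUE life distributions with bounded means converging in distribution
to a continuous life distribution `G` with finite mean `μ`, then `G` is NBUE. -/
theorem nbue_closed_under_weak_convergence
    (F : ℕ → ℝ → ℝ) (μn : ℕ → ℝ) (M : ℝ)
    (hmono : ∀ n, Monotone (F n)) (hneg : ∀ n, ∀ t < (0:ℝ), F n t = 0)
    (hlim : ∀ n, Tendsto (F n) atTop (nhds 1))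
    (hintn : ∀ n, IntegrableOn (fun t => 1 - F n t) (Ioi 0))
    (hmean : ∀ n, ∫ t in Ioi (0:ℝ), (1 - F n t) = μn n)
    (hNBUE : ∀ n, ∀ t ≥ (0:ℝ), ∫ x in Ioi t, (1 - F n x) ≤ μn n * (1 - F n t))
    (hM : ∀ n, μn n ≤ M)
    (G : ℝ → ℝ) (μ : ℝ)
    (hGmono : Monotone G) (hGneg : ∀ t < (0:ℝ), G t = 0)
    (hGlim : Tendsto G atTop (nhds 1)) (hGcont : Continuous G)
    (hGint : IntegrableOn (fun t => 1 - G t) (Ioi 0))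
    (hGmean : ∫ t in Ioi (0:ℝ), (1 - G t) = μ)
    (hconv : ∀ x, Tendsto (fun n => F n x) atTop (nhds (G x))) :
    ∀ t ≥ (0:ℝ), ∫ x in Ioi t, (1 - G x) ≤ μ * (1 - G t) := by
  -- basic bounds
  have hF0 : ∀ n x, 0 ≤ F n x := by
    intro n x
    rcases lt_or_ge x 0 with h | h
    · rw [hneg n x h]
    · rw [← hneg n (-1) (by norm_num)]; exact hmono n (by linarith)
  have hF1 : ∀ n x, F n x ≤ 1 := fun n x =>
    ge_of_tendsto (hlim n) (eventually_atTop.2 ⟨x, fun y hy => hmono n hy⟩)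
  have hG1 : ∀ x, G x ≤ 1 := fun x =>
    ge_of_tendsto hGlim (eventually_atTop.2 ⟨x, fun y hy => hGmono hy⟩)
  have hFmeas : ∀ n, Measurable (F n) := fun n => (hmono n).measurable
  -- convergence of integrals on finite intervals (dominated convergence)
  have hconvInt : ∀ a b : ℝ, Tendsto (fun n => ∫ x in Ioc a b, (1 - F n x)) atTop
      (nhds (∫ x in Ioc a b, (1 - G x))) := by
    intro a b
    apply tendsto_integral_of_dominated_convergence (fun _ => (1:ℝ))
      (fun n => (measurable_const.sub (hFmeas n)).aestronglyMeasurable)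
      (integrable_const 1)
    · intro n
      filter_upwards with x
      simp only [Pi.sub_apply, Real.norm_eq_abs, abs_le]
      constructor <;> [skip; skip] <;> [linarith [hF1 n x]; linarith [hF0 n x]]
    · filter_upwards with x
      exact tendsto_const_nhds.sub (hconv x)
  -- integral over Ioc t b is ≤ integral over Ioi t, for t ≥ 0
  have hmonoInt : ∀ n (t b : ℝ), 0 ≤ t →
      ∫ x in Ioc t b, (1 - F n x) ≤ ∫ x in Ioi t, (1 - F n x) := by
    intro n t b ht
    apply setIntegral_mono_set ((hintn n).mono_set (Ioi_subset_Ioi ht))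
    · exact Eventually.of_forall fun x => by
        simp only [Pi.zero_apply]; linarith [hF1 n x]
    · exact HasSubset.Subset.eventuallyLE Ioc_subset_Ioi_self
  have hμ0 : ∀ n, 0 ≤ μn n := by
    intro n
    rw [← hmean n]
    exact setIntegral_nonneg measurableSet_Ioi fun x _ => by linarith [hF1 n x]
  have hM0 : (0:ℝ) ≤ M := le_trans (hμ0 0) (hM 0)
  -- the truncated G-mean tends to μ as b → ∞
  have hIlim : Tendsto (fun b => ∫ x in Ioc 0 b, (1 - G x)) atTop (nhds μ) := by
    have h := intervalIntegral_tendsto_integral_Ioi 0 hGint tendsto_id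
    rw [hGmean] at h
    refine Tendsto.congr' ?_ h
    filter_upwards [eventually_ge_atTop (0:ℝ)] with b hb
    simp only [id_eq]
    rw [intervalIntegral.integral_of_le hb]
  have hGtail : Tendsto (fun b => M * (1 - G b)) atTop (nhds 0) := by
    have h : Tendsto (fun b => M * (1 - G b)) atTop (nhds (M * (1 - 1))) :=
      tendsto_const_nhds.mul (tendsto_const_nhds.sub hGlim)
    simpa using h
  -- μn → μ
  have hμtend : Tendsto μn atTop (nhds μ) := by
    rw [Metric.tendsto_atTop]
    intro ε hε
    have E1 : ∀ᶠ b in atTop, dist (∫ x in Ioc (0:ℝ) b, (1 - G x)) μ < ε/3 :=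
      Metric.tendsto_nhds.mp hIlim (ε/3) (by linarith)
    have E2 : ∀ᶠ b in atTop, M * (1 - G b) < ε/3 := by
      have := Metric.tendsto_nhds.mp hGtail (ε/3) (by linarith)
      filter_upwards [this] with b hb
      rw [Real.dist_eq] at hb
      calc M * (1 - G b) ≤ |M * (1 - G b) - 0| := by rw [sub_zero]; exact le_abs_self _
        _ < ε/3 := hb
    obtain ⟨b, hb1, hb2, hb0⟩ := (E1.and (E2.and (eventually_ge_atTop (0:ℝ)))).exists
    -- split μn n = ∫ Ioc 0 b + ∫ Ioi b
    have hsplit : ∀ n, μn n = (∫ x in Ioc 0 b, (1 - F n x)) + ∫ x in Ioi b, (1 - F n x) := by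
      intro n
      rw [← hmean n, ← Ioc_union_Ioi_eq_Ioi hb0]
      rw [setIntegral_union (Ioc_disjoint_Ioi le_rfl) measurableSet_Ioi
        ((hintn n).mono_set (by rw [← Ioc_union_Ioi_eq_Ioi hb0]; exact subset_union_left))
        ((hintn n).mono_set (by rw [← Ioc_union_Ioi_eq_Ioi hb0]; exact subset_union_right))]
    have E3 : ∀ᶠ n in atTop, dist (∫ x in Ioc (0:ℝ) b, (1 - F n x)) (∫ x in Ioc (0:ℝ) b, (1 - G x)) < ε/3 :=
      Metric.tendsto_nhds.mp (hconvInt 0 b) (ε/3) (by linarith)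
    have E4 : ∀ᶠ n in atTop, M * (1 - F n b) < ε/3 := by
      have hc : Tendsto (fun n => M * (1 - F n b)) atTop (nhds (M * (1 - G b))) :=
        tendsto_const_nhds.mul (tendsto_const_nhds.sub (hconv b))
      exact hc.eventually_lt_const hb2
    obtain ⟨N, hN⟩ := eventually_atTop.mp (E3.and E4)
    refine ⟨N, fun n hn => ?_⟩
    obtain ⟨h3, h4⟩ := hN n hn
    rw [Real.dist_eq] at h3 hb1 ⊢
    set A := ∫ x in Ioc (0:ℝ) b, (1 - F n x)
    set I := ∫ x in Ioc (0:ℝ) b, (1 - G x)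
    have htail1 : 0 ≤ ∫ x in Ioi b, (1 - F n x) :=
      setIntegral_nonneg measurableSet_Ioi fun x _ => by linarith [hF1 n x]
    have htail2 : (∫ x in Ioi b, (1 - F n x)) ≤ M * (1 - F n b) := by
      calc (∫ x in Ioi b, (1 - F n x)) ≤ μn n * (1 - F n b) := hNBUE n b hb0
        _ ≤ M * (1 - F n b) := mul_le_mul_of_nonneg_right (hM n) (by linarith [hF1 n b])
    have ht1 : |μn n - μ| ≤ |μn n - A| + |A - I| + |I - μ| := by
      calc |μn n - μ| ≤ |μn n - A| + |A - μ| := abs_sub_le _ _ _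
        _ ≤ |μn n - A| + (|A - I| + |I - μ|) := by linarith [abs_sub_le A I μ]
        _ = _ := by ring
    have ht2 : |μn n - A| = μn n - A := by
      rw [abs_of_nonneg]
      rw [hsplit n]; simp [A]; linarith
    have ht3 : μn n - A ≤ M * (1 - F n b) := by
      rw [hsplit n]; simp [A]; linarith
    linarith
  -- main estimate
  intro t ht
  have key : ∀ b, ∫ x in Ioc t b, (1 - G x) ≤ μ * (1 - G t) := by
    intro b
    have h2 : Tendsto (fun n => μn n * (1 - F n t)) atTop (nhds (μ * (1 - G t))) :=
      hμtend.mul (tendsto_const_nhds.sub (hconv t))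
    refine le_of_tendsto_of_tendsto' (hconvInt t b) h2 (fun n => ?_)
    calc ∫ x in Ioc t b, (1 - F n x) ≤ ∫ x in Ioi t, (1 - F n x) := hmonoInt n t b ht
      _ ≤ μn n * (1 - F n t) := hNBUE n t ht
  have h3 : Tendsto (fun b => ∫ x in t..b, (1 - G x)) atTop (nhds (∫ x in Ioi t, (1 - G x))) :=
    intervalIntegral_tendsto_integral_Ioi t (hGint.mono_set (Ioi_subset_Ioi ht)) tendsto_id
  refine le_of_tendsto h3 ?_
  filter_upwards [eventually_ge_atTop t] with b hb
  rw [intervalIntegral.integral_of_le hb]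
  exact key b
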